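/- If ξ has the Max-U-Exp(a, λ) distribution, then E[ξ] = a/2 + (1/(aλ²))(1 - e^{-λa}). -/

import Mathlib

open MeasureTheory Set Filter Topology

/-- The Max-U-Exp(a, λ) probability density function. -/
noncomputable def maxUExpPDF (a lam x : ℝ) : ℝ :=
  if x ≤ 0 then 0
  else if x ≤ a then (1 / a) * (1 - Real.exp (-lam * x) + lam * x * Real.exp (-lam * x))
  else lam * Real.exp (-lam * x)

theorem maxUExp_mean (a lam : ℝ) (ha : 0 < a) (hlam : 0 < lam) :
    (∫ x in Set.Ioi (0 : ℝ), x * maxUExpPDF a lam x) =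
      a / 2 + (1 / (a * lam ^ 2)) * (1 - Real.exp (-lam * a)) := by
  have hlam' : lam ≠ 0 := hlam.ne'
  have ha' : a ≠ 0 := ha.ne'
  -- derivative of exp(-lam*x)
  have hexp : ∀ x : ℝ, HasDerivAt (fun y => Real.exp (-lam * y)) (-lam * Real.exp (-lam * x)) x := by
    intro x
    have h := (Real.hasDerivAt_exp (-lam * x)).comp x ((hasDerivAt_id x).const_mul (-lam))
    have h' : HasDerivAt (fun y => Real.exp (-lam * y)) (Real.exp (-lam * x) * (-lam * 1)) x := h
    simpa [mul_comm] using h'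
  -- the tail antiderivative
  set G : ℝ → ℝ := fun x => -(x + 1 / lam) * Real.exp (-lam * x) with hG
  have hGd : ∀ x : ℝ, HasDerivAt G (x * (lam * Real.exp (-lam * x))) x := by
    intro x
    have h1 : HasDerivAt (fun y : ℝ => -(y + 1 / lam)) (-1) x := by
      exact ((hasDerivAt_id x).add_const (1 / lam)).neg
    have h := h1.mul (hexp x)
    refine h.congr_deriv ?_
    have hl : 1 / lam * lam = 1 := by field_simp
    linear_combination (Real.exp (-lam * x)) * hl
  have hGtend : Tendsto G atTop (𝓝 0) := by
    have t0 : Tendsto (fun y : ℝ => y * Real.exp (-y)) atTop (𝓝 0) := by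
      simpa using Real.tendsto_pow_mul_exp_neg_atTop_nhds_zero 1
    have tlin : Tendsto (fun x : ℝ => lam * x) atTop atTop :=
      Tendsto.const_mul_atTop hlam tendsto_id
    have t1 : Tendsto (fun x : ℝ => lam * x * Real.exp (-(lam * x))) atTop (𝓝 0) := t0.comp tlin
    have t2 : Tendsto (fun x : ℝ => Real.exp (-(lam * x))) atTop (𝓝 0) :=
      Real.tendsto_exp_neg_atTop_nhds_zero.comp tlin
    have := ((t1.const_mul (1 / lam)).add (t2.const_mul (1 / lam))).neg
    simp only [mul_zero, add_zero, neg_zero] at this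
    refine this.congr fun x => ?_
    simp only [hG]
    field_simp
  -- tail integral
  have htail : (∫ x in Ioi a, x * (lam * Real.exp (-lam * x))) = 0 - G a :=
    integral_Ioi_of_hasDerivAt_of_nonneg' (fun x _ => hGd x)
      (fun x hx => by
        have hx0 : (0:ℝ) ≤ x := (ha.trans hx).le
        positivity) hGtend
  have htailInt : IntegrableOn (fun x => x * (lam * Real.exp (-lam * x))) (Ioi a) :=
    integrableOn_Ioi_deriv_of_nonneg' (fun x _ => hGd x)
      (fun x hx => by
        have hx0 : (0:ℝ) ≤ x := (ha.trans hx).le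
        positivity) hGtend
  -- equality of integrand on the tail
  have htailEq : EqOn (fun x => x * (lam * Real.exp (-lam * x)))
      (fun x => x * maxUExpPDF a lam x) (Ioi a) := by
    intro x hx
    have hx1 : ¬ x ≤ 0 := not_le.mpr (ha.trans hx)
    have hx2 : ¬ x ≤ a := not_le.mpr hx
    simp [maxUExpPDF, hx1, hx2]
  -- equality of integrand on the front
  have hfrontEq : EqOn (fun x : ℝ =>
      x * ((1 / a) * (1 - Real.exp (-lam * x) + lam * x * Real.exp (-lam * x))))
      (fun x => x * maxUExpPDF a lam x) (Ioc 0 a) := by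
    intro x hx
    have hx1 : ¬ x ≤ 0 := not_le.mpr hx.1
    simp [maxUExpPDF, hx1, hx.2]
  -- continuity of the front integrand
  have hcont : Continuous (fun x : ℝ =>
      x * ((1 / a) * (1 - Real.exp (-lam * x) + lam * x * Real.exp (-lam * x)))) := by
    fun_prop
  have hfrontInt : IntegrableOn (fun x => x * maxUExpPDF a lam x) (Ioc 0 a) :=
    (hcont.integrableOn_Ioc).congr_fun hfrontEq measurableSet_Ioc
  have htailInt' : IntegrableOn (fun x => x * maxUExpPDF a lam x) (Ioi a) :=
    htailInt.congr_fun htailEq measurableSet_Ioi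
  -- split the integral
  have hunion : Ioc (0:ℝ) a ∪ Ioi a = Ioi 0 := Ioc_union_Ioi_eq_Ioi ha.le
  rw [← hunion, setIntegral_union (Ioc_disjoint_Ioi le_rfl) measurableSet_Ioi hfrontInt htailInt']
  -- compute the front integral via FTC
  set F : ℝ → ℝ := fun x => (1 / a) * (x ^ 2 / 2 + (x / lam + 1 / lam ^ 2) * Real.exp (-lam * x)
      - (x ^ 2 + 2 * x / lam + 2 / lam ^ 2) * Real.exp (-lam * x)) with hF
  have hFd : ∀ x : ℝ, HasDerivAt F
      (x * ((1 / a) * (1 - Real.exp (-lam * x) + lam * x * Real.exp (-lam * x)))) x := by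
    intro x
    have h1 : HasDerivAt (fun y : ℝ => y ^ 2 / 2) x x := by
      have := (hasDerivAt_pow 2 x).div_const 2
      refine this.congr_deriv ?_
      norm_num
    have h2 : HasDerivAt (fun y : ℝ => y / lam + 1 / lam ^ 2) (1 / lam) x := by
      exact ((hasDerivAt_id x).div_const lam).add_const (1 / lam ^ 2)
    have h3 := h2.mul (hexp x)
    have h4 : HasDerivAt (fun y : ℝ => y ^ 2 + 2 * y / lam + 2 / lam ^ 2)
        (2 * x + 2 / lam) x := by
      have hp : HasDerivAt (fun y : ℝ => y ^ 2) (2 * x) x := by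
        simpa using hasDerivAt_pow 2 x
      have hq : HasDerivAt (fun y : ℝ => 2 * y / lam) (2 / lam) x := by
        have := ((hasDerivAt_id x).const_mul 2).div_const lam
        simpa [mul_div_assoc] using this
      simpa using (hp.add hq).add_const (2 / lam ^ 2)
    have h5 := h4.mul (hexp x)
    have h := ((h1.add h3).sub h5).const_mul (1 / a)
    refine h.congr_deriv ?_
    have hl : 1 / lam * lam = 1 := by field_simp
    have hl2 : 1 / lam ^ 2 * lam = 1 / lam := by field_simp
    linear_combination (1 / a) * x * Real.exp (-lam * x) * hl + (1 / a) * Real.exp (-lam * x) * hl2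
  have hfront : (∫ x in Ioc (0:ℝ) a, x * maxUExpPDF a lam x)
      = F a - F 0 := by
    rw [← setIntegral_congr_fun measurableSet_Ioc hfrontEq,
      ← intervalIntegral.integral_of_le ha.le]
    exact intervalIntegral.integral_eq_sub_of_hasDerivAt (fun x _ => hFd x)
      (hcont.intervalIntegrable 0 a)
  have htail' : (∫ x in Ioi a, x * maxUExpPDF a lam x) = 0 - G a := by
    rw [← setIntegral_congr_fun measurableSet_Ioi htailEq]
    exact htail
  rw [hfront, htail', hF, hG]
  simp only [Real.exp_zero, mul_zero, neg_zero]
  field_simp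
  ring
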